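/- Let A = e^{iπ/4} ∈ ℂ, and let ℤΦ = {n·z : n ∈ ℤ, z ∈ ℂ, z⁸ = 1}. For all integers a, b, k, l, the complex number a·Aᵏ + b·Aˡ belongs to ℤΦ if and only if a·b = 0 or k ≡ l (mod 4). -/

import Mathlib

open Complex

/-- `A = e^{iπ/4}`, the primitive 8th root of unity. -/
noncomputable def A : ℂ := Complex.exp (Real.pi * Complex.I / 4)

/-- `ℤΦ`, the set of integer multiples of 8th roots of unity. -/
def ZPhi : Set ℂ := {w : ℂ | ∃ (n : ℤ) (z : ℂ), z ^ 8 = 1 ∧ w = (n : ℂ) * z}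

lemma A_ne_zero : A ≠ 0 := Complex.exp_ne_zero _

lemma A_eq : A = ((Real.sqrt 2 / 2 : ℝ) : ℂ) + ((Real.sqrt 2 / 2 : ℝ) : ℂ) * I := by
  unfold A
  rw [show (↑Real.pi * I / 4 : ℂ) = ((Real.pi / 4 : ℝ) : ℂ) * I by push_cast; ring,
    Complex.exp_mul_I, ← Complex.ofReal_cos, ← Complex.ofReal_sin,
    Real.cos_pi_div_four, Real.sin_pi_div_four]

lemma A_sq : A ^ 2 = I := by
  unfold A
  rw [← Complex.exp_nat_mul,
    show ((2:ℕ) : ℂ) * (↑Real.pi * I / 4) = ((Real.pi / 2 : ℝ) : ℂ) * I by push_cast; ring,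
    Complex.exp_mul_I, ← Complex.ofReal_cos, ← Complex.ofReal_sin,
    Real.cos_pi_div_two, Real.sin_pi_div_two]
  simp

lemma A_pow4 : A ^ 4 = -1 := by
  have : A ^ 4 = (A ^ 2) ^ 2 := by ring
  rw [this, A_sq, Complex.I_sq]

lemma A_pow8 : A ^ 8 = 1 := by
  have : A ^ 8 = (A ^ 4) ^ 2 := by ring
  rw [this, A_pow4]; ring

lemma A_cube : A ^ 3 = -((Real.sqrt 2 / 2 : ℝ) : ℂ) + ((Real.sqrt 2 / 2 : ℝ) : ℂ) * I := by
  have : A ^ 3 = A ^ 2 * A := by ring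
  rw [this, A_sq, A_eq]
  linear_combination (↑(Real.sqrt 2 / 2 : ℝ) : ℂ) * Complex.I_sq

/-- linear independence of 1, A, A², A³ over ℤ -/
lemma key (x0 x1 x2 x3 : ℤ)
    (h : (x0 : ℂ) + x1 * A + x2 * A ^ 2 + x3 * A ^ 3 = 0) :
    x0 = 0 ∧ x1 = 0 ∧ x2 = 0 ∧ x3 = 0 := by
  set c : ℝ := Real.sqrt 2 / 2 with hc
  have h' : ((x0 + x1 * c - x3 * c : ℝ) : ℂ) + ((x2 + x1 * c + x3 * c : ℝ) : ℂ) * I = 0 := by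
    rw [A_cube, A_sq, A_eq] at h
    push_cast
    linear_combination h
  have hre : (x0 : ℝ) + x1 * c - x3 * c = 0 := by
    have := congrArg Complex.re h'; simpa using this
  have him : (x2 : ℝ) + x1 * c + x3 * c = 0 := by
    have := congrArg Complex.im h'; simpa using this
  have hirr : Irrational c := by
    rw [hc]
    have := irrational_sqrt_two.div_intCast (by norm_num : (2:ℤ) ≠ 0)
    simpa using this
  have aux : ∀ p q : ℤ, (p : ℝ) + q * c = 0 → p = 0 ∧ q = 0 := by
    intro p q hpq
    rcases eq_or_ne q 0 with hq | hq
    · subst hq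
      norm_num at hpq
      exact ⟨by exact_mod_cast hpq, rfl⟩
    · exfalso
      apply hirr
      refine ⟨(-p : ℚ) / q, ?_⟩
      have hq' : (q : ℝ) ≠ 0 := Int.cast_ne_zero.mpr hq
      push_cast
      field_simp
      linarith
  have h1 := aux x0 (x1 - x3) (by push_cast; linarith)
  have h2 := aux x2 (x1 + x3) (by push_cast; linarith)
  refine ⟨h1.1, ?_, h2.1, ?_⟩ <;> omega

lemma Adecomp (t : ℤ) :
    ∃ e : ℤ, (e = 1 ∨ e = -1) ∧ A ^ t = (e : ℂ) * A ^ ((t % 4).toNat) := by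
  have hmod : A ^ t = ((-1 : ℂ)) ^ (t / 4) * A ^ ((t % 4).toNat) := by
    conv_lhs => rw [show t = 4 * (t / 4) + t % 4 by omega]
    rw [zpow_add₀ A_ne_zero, zpow_mul]
    rw [show A ^ ((4:ℤ)) = -1 by rw [show (4:ℤ) = ((4:ℕ):ℤ) by norm_num, zpow_natCast, A_pow4]]
    rw [← zpow_natCast A ((t % 4).toNat), Int.toNat_of_nonneg (by omega)]
  rcases Int.even_or_odd (t / 4) with he | he
  · exact ⟨1, Or.inl rfl, by rw [hmod, he.neg_one_zpow]; push_cast; ring⟩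
  · exact ⟨-1, Or.inr rfl, by rw [hmod, he.neg_one_zpow]; push_cast; ring⟩

lemma key' (x : ℕ → ℤ)
    (h : (x 0 : ℂ) + x 1 * A + x 2 * A ^ 2 + x 3 * A ^ 3 = 0) :
    ∀ i, i < 4 → x i = 0 := by
  obtain ⟨h0, h1, h2, h3⟩ := key (x 0) (x 1) (x 2) (x 3) h
  intro i hi
  interval_cases i <;> assumption

lemma delta_sum (m : ℕ) (c : ℤ) (hm : m < 4) :
    ((if m = 0 then c else 0 : ℤ) : ℂ) + ((if m = 1 then c else 0 : ℤ) : ℂ) * A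
      + ((if m = 2 then c else 0 : ℤ) : ℂ) * A ^ 2
      + ((if m = 3 then c else 0 : ℤ) : ℂ) * A ^ 3 = (c : ℂ) * A ^ m := by
  interval_cases m <;> simp

theorem kauffman_bracket_integrality (a b k l : ℤ) :
    ((a : ℂ) * A ^ k + (b : ℂ) * A ^ l ∈ ZPhi) ↔ (a * b = 0 ∨ k ≡ l [ZMOD 4]) := by
  have hKlt : (k % 4).toNat < 4 := by omega
  have hLlt : (l % 4).toNat < 4 := by omega
  obtain ⟨e1, he1, hk⟩ := Adecomp k
  obtain ⟨e2, he2, hl⟩ := Adecomp l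
  set K := (k % 4).toNat with hKdef
  set L := (l % 4).toNat with hLdef
  constructor
  · rintro ⟨n, z, hz8, hw⟩
    by_cases hab : a * b = 0
    · exact Or.inl hab
    right
    have ha : a ≠ 0 := fun h => hab (by simp [h])
    have hb : b ≠ 0 := fun h => hab (by simp [h])
    -- identify z as a power of A
    have hprim : IsPrimitiveRoot A 8 := by
      have h8 := Complex.isPrimitiveRoot_exp 8 (by norm_num)
      have harg : Complex.exp (2 * ↑Real.pi * I / ((8:ℕ):ℂ)) = A := by
        unfold A; congr 1; push_cast; ring
      rwa [harg] at h8
    obtain ⟨j, hj8, hzj⟩ := hprim.eq_pow_of_pow_eq_one hz8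
    obtain ⟨e3, he3, hj⟩ := Adecomp (j : ℤ)
    have hJlt : ((j : ℤ) % 4).toNat < 4 := by omega
    set J := ((j : ℤ) % 4).toNat with hJdef
    have heq : (a * e1 : ℂ) * A ^ K + (b * e2 : ℂ) * A ^ L - (n * e3 : ℂ) * A ^ J = 0 := by
      have hzj' : z = A ^ ((j : ℤ)) := by rw [← hzj, zpow_natCast]
      rw [hk, hl] at hw
      rw [hzj', hj] at hw
      linear_combination hw
    -- delta-function coefficients
    set x : ℕ → ℤ := fun i =>
      (if K = i then a * e1 else 0) + (if L = i then b * e2 else 0)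
        - (if J = i then n * e3 else 0) with hxdef
    have hsum : (x 0 : ℂ) + x 1 * A + x 2 * A ^ 2 + x 3 * A ^ 3 = 0 := by
      have d1 := delta_sum K (a * e1) hKlt
      have d2 := delta_sum L (b * e2) hLlt
      have d3 := delta_sum J (n * e3) hJlt
      simp only [hxdef]
      push_cast [apply_ite (fun r : ℤ => (r : ℂ))]
      push_cast at d1 d2 d3
      linear_combination d1 + d2 - d3 + heq
    have hx := key' x hsum
    -- show K = L
    have hKL : K = L := by
      by_contra hne
      have hxK := hx K hKlt
      have hxL := hx L hLlt
      simp only [hxdef] at hxK hxL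
      have ha' : a * e1 ≠ 0 := by rcases he1 with h | h <;> simp [h, ha]
      have hb' : b * e2 ≠ 0 := by rcases he2 with h | h <;> simp [h, hb]
      by_cases hJK : J = K
      · rw [hJK] at hxL
        simp [hne] at hxL
        exact hb' (mul_eq_zero.mpr hxL)
      · simp [show L ≠ K from fun h => hne h.symm, hJK] at hxK
        exact ha' (mul_eq_zero.mpr hxK)
    show k % 4 = l % 4
    omega
  · rintro (hab | hkl)
    · rcases mul_eq_zero.mp hab with h | h
      · subst h
        refine ⟨b * e2, A ^ L, ?_, ?_⟩
        · rw [← pow_mul, show L * 8 = 8 * L by ring, pow_mul, A_pow8, one_pow]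
        · rw [hl]; push_cast; ring
      · subst h
        refine ⟨a * e1, A ^ K, ?_, ?_⟩
        · rw [← pow_mul, show K * 8 = 8 * K by ring, pow_mul, A_pow8, one_pow]
        · rw [hk]; push_cast; ring
    · have hKL : K = L := by
        have : k % 4 = l % 4 := hkl
        omega
      refine ⟨a * e1 + b * e2, A ^ K, ?_, ?_⟩
      · rw [← pow_mul, show K * 8 = 8 * K by ring, pow_mul, A_pow8, one_pow]
      · rw [hk, hl, ← hKL]; push_cast; ring
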